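/- Let M be an invertible n × n matrix over a field k such that for all indices i, j, k with k ≠ i one has M_{j i} · (M⁻¹)_{k j} = 0. Then every row of M contains exactly one nonzero entry (i.e. M is a monomial matrix). -/
import Mathlib


/-- If `M` is invertible and `M j i * (M⁻¹) l j = 0` whenever `l ≠ i`, then every
row of `M` has exactly one nonzero entry. -/
theorem stmt_7 (k : Type*) [Field k] {n : ℕ} (M : Matrix (Fin n) (Fin n) k)
    (hM : IsUnit M)
    (h : ∀ i j l : Fin n, l ≠ i → M j i * M⁻¹ l j = 0) :
    ∀ j : Fin n, ∃! i : Fin n, M j i ≠ 0 := by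
  intro j
  have h1 : M * M⁻¹ = 1 := Matrix.mul_nonsing_inv M ((Matrix.isUnit_iff_isUnit_det M).mp hM)
  have hsum : ∑ l, M j l * M⁻¹ l j = 1 := by
    have := congrFun (congrFun h1 j) j
    simpa [Matrix.mul_apply, Matrix.one_apply] using this
  have hex : ∃ i, M j i * M⁻¹ i j ≠ 0 := by
    by_contra hc
    push_neg at hc
    simp [hc] at hsum

  obtain ⟨i, hi⟩ := hex
  refine ⟨i, fun h0 => hi (by rw [h0, zero_mul]), fun i' hi' => ?_⟩
  by_contra hne
  -- M j i' ≠ 0, i' ≠ i, so M⁻¹ l j = 0 for all l ≠ i', and M⁻¹ i j = 0 since i ≠ i'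
  have : M⁻¹ i j = 0 := by
    have := h i' j i (fun hh => hne hh.symm)
    rcases mul_eq_zero.mp this with h2 | h2
    · exact absurd h2 hi'
    · exact h2
  exact hi (by rw [this, mul_zero])
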